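/- For every positive integer n, the number of staircase tableaux of size n that contain no symbol δ equals the double factorial (2n+1)!! = 1·3·5⋯(2n+1). -/

import Mathlib

inductive SLetter : Type
  | A | B | G | D
deriving DecidableEq, Repr

instance : Fintype SLetter where
  elems := {SLetter.A, SLetter.B, SLetter.G, SLetter.D}
  complete := fun x => by cases x <;> simp

/-- A filling `T` of the staircase Young diagram of shape `(n, n-1, …, 1)`
(boxes `(i,j)` with `i + j < n`, row `i` from the top, column `j` from the left,
diagonal boxes those with `i + j + 1 = n`) is a staircase tableau if:
boxes outside the shape are unused (empty); no diagonal box is empty;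
all boxes to the left of a `β` or `δ` in its row are empty;
all boxes above an `α` or `γ` in its column are empty. -/
def IsStaircase (n : ℕ) (T : Fin n → Fin n → Option SLetter) : Prop :=
  (∀ i j : Fin n, n ≤ (i : ℕ) + (j : ℕ) → T i j = none) ∧
  (∀ i j : Fin n, (i : ℕ) + (j : ℕ) + 1 = n → T i j ≠ none) ∧
  (∀ i j j' : Fin n, j' < j → (T i j = some SLetter.B ∨ T i j = some SLetter.D) →
      T i j' = none) ∧
  (∀ i i' j : Fin n, i' < i → (T i j = some SLetter.A ∨ T i j = some SLetter.G) →
      T i' j = none)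

instance (n : ℕ) : DecidablePred (IsStaircase n) := fun T => by
  unfold IsStaircase; infer_instance

/-- The staircase tableaux of size `n`. -/
def StaircaseTableau (n : ℕ) : Type :=
  {T : Fin n → Fin n → Option SLetter // IsStaircase n T}

instance (n : ℕ) : Fintype (StaircaseTableau n) := Subtype.fintype _

instance (n : ℕ) : DecidableEq (StaircaseTableau n) := Subtype.instDecidableEq

/-- The number of boxes of `T` filled with the symbol `x`. -/
def countLetter (n : ℕ) (T : Fin n → Fin n → Option SLetter) (x : SLetter) : ℕ :=
  (Finset.univ.filter (fun p : Fin n × Fin n => T p.1 p.2 = some x)).card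

/-- The label of the nearest labeled box strictly to the right of `(i,j)` in row `i`. -/
def rightLabel (n : ℕ) (T : Fin n → Fin n → Option SLetter) (i j : Fin n) : Option SLetter :=
  List.findSome? (fun j' => T i j') ((List.finRange n).drop ((j : ℕ) + 1))

/-- The label of the nearest labeled box strictly below `(i,j)` in column `j`. -/
def belowLabel (n : ℕ) (T : Fin n → Fin n → Option SLetter) (i j : Fin n) : Option SLetter :=
  List.findSome? (fun i' => T i' j) ((List.finRange n).drop ((i : ℕ) + 1))

/-- Whether the (empty) box `(i,j)` receives a `q` in the weight of `T`:
an empty box seeing a `δ` to its right gets `q`; an empty box seeing an `α` or `γ` to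
its right and a `β` or `γ` below it gets `q`; all other (empty) boxes get `1`. -/
def boxQ (n : ℕ) (T : Fin n → Fin n → Option SLetter) (i j : Fin n) : Bool :=
  match T i j with
  | some _ => false
  | none =>
    match rightLabel n T i j, belowLabel n T i j with
    | some SLetter.D, _ => true
    | some SLetter.A, some SLetter.B => true
    | some SLetter.A, some SLetter.G => true
    | some SLetter.G, some SLetter.B => true
    | some SLetter.G, some SLetter.G => true
    | _, _ => false

/-- The exponent of `q` in the weight of `T`. -/
def qCount (n : ℕ) (T : Fin n → Fin n → Option SLetter) : ℕ :=
  (Finset.univ.filter (fun p : Fin n × Fin n => boxQ n T p.1 p.2 = true)).card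

/-- The type of `T`, as a word in `Fin n → Bool`, read off the diagonal boxes from
northeast (index `0`) to southwest (index `n-1`): `true` (a `•`) for each `α` or `δ`,
`false` (a `∘`) for each `β` or `γ`. -/
def typeWord (n : ℕ) (T : Fin n → Fin n → Option SLetter) : Fin n → Bool := fun i =>
  match T i ⟨n - 1 - (i : ℕ), by have := i.isLt; omega⟩ with
  | some SLetter.A => true
  | some SLetter.D => true
  | _ => false

/-- `t(T)`, the number of `•`'s in the type of `T`. -/
def bulletCount (n : ℕ) (T : Fin n → Fin n → Option SLetter) : ℕ :=
  (Finset.univ.filter (fun i : Fin n => typeWord n T i = true)).card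

/-- The weight of a staircase tableau: the product of all its labels, with each empty
box contributing `q` or `1` according to the rules (`u` is set to `1`). -/
def stWt {R : Type*} [CommSemiring R] (n : ℕ) (a b g d q : R)
    (T : Fin n → Fin n → Option SLetter) : R :=
  a ^ countLetter n T SLetter.A * b ^ countLetter n T SLetter.B *
    g ^ countLetter n T SLetter.G * d ^ countLetter n T SLetter.D * q ^ qCount n T

/-- The fugacity partition function `Z_n(y; α, β, γ, δ; q) = Σ_T wt(T) y^{t(T)}`,
summed over all staircase tableaux of size `n`. -/
def stZ (R : Type*) [CommSemiring R] (n : ℕ) (y a b g d q : R) : R :=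
  ∑ T : StaircaseTableau n, stWt n a b g d q T.val * y ^ bulletCount n T.val

/-- The generating polynomial `Z_σ(α, β, γ, δ; q)` of staircase tableaux of a given
type `σ` (encoded as a list of booleans, `true` = `•`, `false` = `∘`). -/
def stZw (R : Type*) [CommSemiring R] (w : List Bool) (a b g d q : R) : R :=
  ∑ T ∈ Finset.univ.filter
      (fun T : StaircaseTableau w.length => List.ofFn (typeWord w.length T.val) = w),
    stWt w.length a b g d q T.val


namespace ND

open Finset

abbrev Grid (n : ℕ) := Fin n → Fin n → Option SLetter

def ST (n : ℕ) : Finset (Grid n) :=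
  univ.filter (fun T => IsStaircase n T ∧ countLetter n T SLetter.D = 0)

def freeCount (n : ℕ) (T : Grid n) : ℕ :=
  (univ.filter (fun i : Fin n => ∀ j, T i j ≠ some SLetter.B)).card

def S (n v : ℕ) : ℕ := ∑ T ∈ ST n, v ^ freeCount n T

lemma countLetter_eq_zero {n : ℕ} {T : Grid n} {x : SLetter} :
    countLetter n T x = 0 ↔ ∀ i j, T i j ≠ some x := by
  rw [countLetter, Finset.card_eq_zero, Finset.filter_eq_empty_iff]
  constructor
  · intro h i j
    exact h (mem_univ (i, j))
  · rintro h ⟨i, j⟩ _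
    exact h i j

lemma S_zero (v : ℕ) : S 0 v = 1 := by
  have h : ST 0 = {fun i _ => i.elim0} := by
    ext T
    simp only [ST, mem_filter, mem_univ, true_and, mem_singleton]
    constructor
    · intro _
      funext i; exact i.elim0
    · rintro rfl
      refine ⟨⟨fun i => i.elim0, fun i => i.elim0, fun i => i.elim0, fun i => i.elim0⟩, ?_⟩
      rw [countLetter_eq_zero]; exact fun i => i.elim0
  rw [S, h, Finset.sum_singleton]
  simp [freeCount]

lemma geo (v : ℕ) : ∀ r : ℕ, v ^ r + ∑ a ∈ Finset.range r, v ^ a * (v + 1) ^ (r - 1 - a) = (v + 1) ^ r := by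
  intro r
  induction r with
  | zero => simp
  | succ r ih =>
    rw [Finset.sum_range_succ]
    have h1 : ∀ a ∈ Finset.range r, v ^ a * (v+1) ^ (r + 1 - 1 - a) = (v+1) * (v ^ a * (v+1) ^ (r - 1 - a)) := by
      intro a ha
      rw [Finset.mem_range] at ha
      have : r + 1 - 1 - a = (r - 1 - a) + 1 := by omega
      rw [this, pow_succ]; ring
    rw [Finset.sum_congr rfl h1, ← Finset.mul_sum]
    have : r + 1 - 1 - r = 0 := by omega
    rw [this]
    calc v ^ (r+1) + ((v+1) * ∑ a ∈ Finset.range r, v ^ a * (v+1) ^ (r-1-a) + v ^ r * (v+1)^0)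
        = (v+1) * (v ^ r + ∑ a ∈ Finset.range r, v ^ a * (v+1) ^ (r-1-a)) := by ring
      _ = (v+1)^(r+1) := by rw [ih, pow_succ]; ring

lemma card_filter_lt_fin {k : ℕ} (j : Fin k) :
    (univ.filter (fun t : Fin k => t < j)).card = (j : ℕ) := by
  have himg : (univ.filter (fun t : Fin k => t < j)).image Fin.val = Finset.range (j : ℕ) := by
    ext a
    simp only [mem_image, mem_filter, mem_univ, true_and, Finset.mem_range]
    constructor
    · rintro ⟨t, ht, rfl⟩; exact ht
    · intro ha
      exact ⟨⟨a, lt_trans ha j.isLt⟩, by simpa [Fin.lt_def] using ha, rfl⟩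
  rw [← Finset.card_range (j : ℕ), ← himg,
    Finset.card_image_of_injective _ Fin.val_injective]

end ND

namespace ND2
open Finset

lemma card_filter_le_fin {k : ℕ} (j : Fin k) :
    (univ.filter (fun t : Fin k => t ≤ j)).card = (j : ℕ) + 1 := by
  have himg : (univ.filter (fun t : Fin k => t ≤ j)).image Fin.val = Finset.range ((j : ℕ) + 1) := by
    ext a
    simp only [mem_image, mem_filter, mem_univ, true_and, Finset.mem_range]
    constructor
    · rintro ⟨t, ht, rfl⟩; exact Nat.lt_succ_of_le ht
    · intro ha
      exact ⟨⟨a, lt_of_le_of_lt (Nat.le_of_lt_succ ha) j.isLt⟩,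
        by simpa [Fin.le_def] using Nat.le_of_lt_succ ha, rfl⟩
  rw [← Finset.card_range ((j : ℕ) + 1), ← himg,
    Finset.card_image_of_injective _ Fin.val_injective]

lemma card_filter_gt_fin {k : ℕ} (j : Fin k) :
    (univ.filter (fun t : Fin k => j < t)).card = k - 1 - (j : ℕ) := by
  have h : (univ.filter (fun t : Fin k => j < t)) = univ \ (univ.filter (fun t => t ≤ j)) := by
    ext t; simp [not_le]
  rw [h, Finset.card_sdiff_of_subset (Finset.filter_subset _ _), card_filter_le_fin, card_univ,
    Fintype.card_fin]
  omega

variable {N : ℕ}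

lemma filter_lt_eq_image (F : Finset (Fin N)) (j : Fin F.card) :
    F.filter (· < ((F.orderIsoOfFin rfl j : F) : Fin N)) =
      (univ.filter (fun t : Fin F.card => t < j)).image
        (fun t => ((F.orderIsoOfFin rfl t : F) : Fin N)) := by
  set e := F.orderIsoOfFin rfl
  ext x
  simp only [mem_filter, mem_image, mem_univ, true_and]
  constructor
  · rintro ⟨hxF, hlt⟩
    refine ⟨e.symm ⟨x, hxF⟩, ?_, by simp⟩
    have : e (e.symm ⟨x, hxF⟩) < e j := by
      rw [e.apply_symm_apply]
      exact Subtype.mk_lt_mk.2 hlt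
    exact e.lt_iff_lt.1 this
  · rintro ⟨t, ht, rfl⟩
    exact ⟨(e t).2, Subtype.coe_lt_coe.2 (e.lt_iff_lt.2 ht)⟩

lemma filter_gt_eq_image (F : Finset (Fin N)) (j : Fin F.card) :
    F.filter (fun i => ((F.orderIsoOfFin rfl j : F) : Fin N) < i) =
      (univ.filter (fun t : Fin F.card => j < t)).image
        (fun t => ((F.orderIsoOfFin rfl t : F) : Fin N)) := by
  set e := F.orderIsoOfFin rfl
  ext x
  simp only [mem_filter, mem_image, mem_univ, true_and]
  constructor
  · rintro ⟨hxF, hlt⟩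
    refine ⟨e.symm ⟨x, hxF⟩, ?_, by simp⟩
    have : e j < e (e.symm ⟨x, hxF⟩) := by
      rw [e.apply_symm_apply]
      exact Subtype.mk_lt_mk.2 hlt
    exact e.lt_iff_lt.1 this
  · rintro ⟨t, ht, rfl⟩
    exact ⟨(e t).2, Subtype.coe_lt_coe.2 (e.lt_iff_lt.2 ht)⟩

lemma orderIso_inj (F : Finset (Fin N)) :
    Function.Injective (fun t : Fin F.card => ((F.orderIsoOfFin rfl t : F) : Fin N)) := by
  intro a b h
  exact (F.orderIsoOfFin rfl).injective (Subtype.val_injective h)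

lemma card_filter_lt (F : Finset (Fin N)) (j : Fin F.card) :
    (F.filter (· < ((F.orderIsoOfFin rfl j : F) : Fin N))).card = (j : ℕ) := by
  rw [filter_lt_eq_image, Finset.card_image_of_injective _ (orderIso_inj F),
    ND.card_filter_lt_fin]

lemma card_filter_gt (F : Finset (Fin N)) (j : Fin F.card) :
    (F.filter (fun i => ((F.orderIsoOfFin rfl j : F) : Fin N) < i)).card
      = F.card - 1 - (j : ℕ) := by
  rw [filter_gt_eq_image, Finset.card_image_of_injective _ (orderIso_inj F),
    card_filter_gt_fin]

end ND2

namespace ND3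
open Finset

lemma final_sum (v r : ℕ) :
    (∑ i ∈ Finset.range (r+1), v ^ i * (v+1) ^ (if i = r then 0 else r - 1 - i))
      = (v+1) ^ r := by
  rw [Finset.sum_range_succ, if_pos rfl]
  have hothers : ∀ i ∈ Finset.range r,
      v ^ i * (v+1) ^ (if i = r then 0 else r - 1 - i) = v ^ i * (v+1) ^ (r - 1 - i) := by
    intro i hi
    rw [Finset.mem_range] at hi
    rw [if_neg (by omega)]
  rw [Finset.sum_congr rfl hothers]
  have := ND.geo v r
  simp only [pow_zero, mul_one]
  omega

lemma sum_aF {m : ℕ} (F : Finset (Fin (m+1))) (hF : Fin.last m ∈ F) (v : ℕ) :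
    ∑ p ∈ F, v ^ (F.filter (· < p)).card *
      (v+1) ^ (F.filter (fun i => p < i ∧ i ≠ Fin.last m)).card
    = (v+1) ^ (F.card - 1) := by
  classical
  set k := F.card with hk_def
  have hk : 1 ≤ k := Finset.card_pos.2 ⟨_, hF⟩
  set e := F.orderIsoOfFin rfl with he
  set f : Fin (m+1) → ℕ := fun p => v ^ (F.filter (· < p)).card *
      (v+1) ^ (F.filter (fun i => p < i ∧ i ≠ Fin.last m)).card with hf
  have step1 : ∑ p ∈ F, f p = ∑ j : Fin k, f ((e j : F) : Fin (m+1)) := by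
    rw [← Finset.sum_coe_sort F f]
    exact (Equiv.sum_comp e.toEquiv (fun i : F => f (i : Fin (m+1)))).symm
  have hj0 : ∀ j : Fin k, ((e j : F) : Fin (m+1)) = Fin.last m ↔ (j : ℕ) = k - 1 := by
    intro j
    set j₀ := e.symm ⟨Fin.last m, hF⟩ with hj₀
    have htop : ∀ t : Fin k, t ≤ j₀ := by
      intro t
      have : e t ≤ e j₀ := by
        rw [hj₀, e.apply_symm_apply]
        exact Subtype.coe_le_coe.1 (by simpa using Fin.le_last ((e t : F) : Fin (m+1)))
      exact e.le_iff_le.1 this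
    have hj₀val : (j₀ : ℕ) = k - 1 := by
      have h1 : (j₀ : ℕ) ≤ k - 1 := by have := j₀.isLt; omega
      have h2 : (⟨k - 1, by omega⟩ : Fin k) ≤ j₀ := htop _
      rw [Fin.le_def] at h2
      simp only [] at h2
      omega
    constructor
    · intro h
      have : e j = ⟨Fin.last m, hF⟩ := Subtype.ext h
      have : j = j₀ := by rw [hj₀, ← this, e.symm_apply_apply]
      rw [this, hj₀val]
    · intro h
      have : j = j₀ := Fin.ext (by rw [h, hj₀val])
      rw [this, hj₀, e.apply_symm_apply]
  have hterm : ∀ j : Fin k, f ((e j : F) : Fin (m+1))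
      = v ^ (j : ℕ) * (v+1) ^ (if (j : ℕ) = k - 1 then 0 else k - 2 - (j : ℕ)) := by
    intro j
    rw [hf]
    simp only []
    rw [ND2.card_filter_lt]
    congr 1
    have herase : F.filter (fun i => ((e j : F) : Fin (m+1)) < i ∧ i ≠ Fin.last m)
        = (F.filter (fun i => ((e j : F) : Fin (m+1)) < i)).erase (Fin.last m) := by
      ext i
      simp only [mem_filter, Finset.mem_erase]
      tauto
    by_cases h : (j : ℕ) = k - 1
    · have hlast : ((e j : F) : Fin (m+1)) = Fin.last m := (hj0 j).2 h
      have hempty : F.filter (fun i => ((e j : F) : Fin (m+1)) < i) = ∅ := by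
        rw [Finset.filter_eq_empty_iff]
        intro i _
        rw [hlast]
        exact not_lt.2 (Fin.le_last i)
      rw [herase, hempty, if_pos h]
      simp
    · have hlt : ((e j : F) : Fin (m+1)) < Fin.last m :=
        lt_of_le_of_ne (Fin.le_last _) (fun heq => h ((hj0 j).1 heq))
      have hmem : Fin.last m ∈ F.filter (fun i => ((e j : F) : Fin (m+1)) < i) :=
        Finset.mem_filter.2 ⟨hF, hlt⟩
      rw [herase, Finset.card_erase_of_mem hmem, ND2.card_filter_gt, if_neg h]
      congr 1
      omega
  rw [step1, Finset.sum_congr rfl (fun j _ => hterm j),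
    Fin.sum_univ_eq_sum_range
      (fun jj => v ^ jj * (v+1) ^ (if jj = k - 1 then 0 else k - 2 - jj)) k]
  obtain ⟨r, hr⟩ : ∃ r, k = r + 1 := ⟨k - 1, by omega⟩
  rw [hr]
  have hnorm : ∀ i ∈ Finset.range (r+1),
      v ^ i * (v+1) ^ (if i = r + 1 - 1 then 0 else r + 1 - 2 - i)
        = v ^ i * (v+1) ^ (if i = r then 0 else r - 1 - i) := by
    intro i hi
    have h1 : r + 1 - 1 = r := by omega
    have h2 : r + 1 - 2 - i = r - 1 - i := by omega
    rw [h1, h2]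
  rw [Finset.sum_congr rfl hnorm, final_sum]
  congr 1
end ND3

namespace ND4
open Finset

variable {m : ℕ}

def VC (F : Finset (Fin (m+1))) (c : Fin (m+1) → Option SLetter) : Prop :=
  c (Fin.last m) ≠ none ∧
  (∀ i, c i ≠ none → i ∈ F) ∧
  (∀ i i' : Fin (m+1), i' < i → (c i = some SLetter.A ∨ c i = some SLetter.G) → c i' = none) ∧
  (∀ i, c i ≠ some SLetter.D)

instance (F : Finset (Fin (m+1))) : DecidablePred (VC F) := fun c => by
  unfold VC; infer_instance

def boxes (F : Finset (Fin (m+1))) (p i : Fin (m+1)) : Finset (Option SLetter) :=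
  if i < p then {none}
  else if i = p then {some SLetter.A, some SLetter.B, some SLetter.G}
  else if i ∈ F then (if i = Fin.last m then {some SLetter.B} else {none, some SLetter.B})
  else {none}

lemma filter_VC_eq (F : Finset (Fin (m+1))) (hF : Fin.last m ∈ F) :
    univ.filter (VC F) = F.biUnion (fun p => Fintype.piFinset (boxes F p)) := by
  ext c
  simp only [mem_filter, mem_univ, true_and, Finset.mem_biUnion, Fintype.mem_piFinset]
  constructor
  · rintro ⟨h1, h2, h3, h4⟩
    have hne : (univ.filter (fun i => c i ≠ none)).Nonempty :=
      ⟨Fin.last m, by simp only [mem_filter, mem_univ, true_and]; exact h1⟩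
    obtain ⟨p, hpne, hmin⟩ : ∃ p : Fin (m+1), c p ≠ none ∧ ∀ i : Fin (m+1), c i ≠ none → p ≤ i := by
      refine ⟨(univ.filter (fun i => c i ≠ none)).min' hne, ?_, ?_⟩
      · exact (mem_filter.1 ((univ.filter (fun i => c i ≠ none)).min'_mem hne)).2
      · exact fun i hi => Finset.min'_le (univ.filter (fun i => c i ≠ none)) i (mem_filter.2 ⟨mem_univ _, hi⟩)
    refine ⟨p, h2 p hpne, fun i => ?_⟩
    rcases lt_trichotomy i p with h | h | h
    · have hcnone : c i = none := by
        by_contra hc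
        exact absurd (hmin i hc) (not_le.2 h)
      rw [boxes, if_pos h]
      simp [hcnone]
    · subst h
      rw [boxes, if_neg (lt_irrefl _), if_pos rfl]
      rcases hcp : c i with _ | x
      · exact absurd hcp hpne
      · have := h4 i
        cases x <;> simp_all
    · rw [boxes, if_neg (not_lt.2 h.le), if_neg (ne_of_gt h)]
      rcases hcv : c i with _ | x
      · by_cases hiF : i ∈ F
        · rw [if_pos hiF]
          by_cases hil : i = Fin.last m
          · subst hil; exact absurd hcv h1
          · rw [if_neg hil]; simp
        · rw [if_neg hiF]; simp
      · have hiF : i ∈ F := h2 i (by simp [hcv])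
        rw [if_pos hiF]
        have hxB : x = SLetter.B := by
          cases x
          · exact absurd (h3 i p h (Or.inl hcv)) hpne
          · rfl
          · exact absurd (h3 i p h (Or.inr hcv)) hpne
          · exact absurd hcv (h4 i)
        subst hxB
        by_cases hil : i = Fin.last m <;> simp [hil]
  · rintro ⟨p, hpF, hall⟩
    have hbox : ∀ i, c i ∈ boxes F p i := hall
    have hAG : ∀ i, (c i = some SLetter.A ∨ c i = some SLetter.G) → i = p := by
      intro i hi
      by_contra hne
      have hb := hbox i
      rw [boxes] at hb
      by_cases h1 : i < p
      · rw [if_pos h1] at hb; rcases hi with h | h <;> simp [h] at hb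
      · rw [if_neg h1, if_neg hne] at hb
        by_cases h2 : i ∈ F
        · rw [if_pos h2] at hb
          by_cases h3 : i = Fin.last m
          · rw [if_pos h3] at hb; rcases hi with h | h <;> simp [h] at hb
          · rw [if_neg h3] at hb; rcases hi with h | h <;> simp [h] at hb
        · rw [if_neg h2] at hb; rcases hi with h | h <;> simp [h] at hb
    refine ⟨?_, ?_, ?_, ?_⟩
    · have hb := hbox (Fin.last m)
      rw [boxes] at hb
      have h1 : ¬ Fin.last m < p := not_lt.2 (Fin.le_last p)
      by_cases h2 : Fin.last m = p
      · rw [if_neg h1, if_pos h2] at hb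
        simp only [Finset.mem_insert, Finset.mem_singleton] at hb
        rcases hb with h | h | h <;> simp [h]
      · rw [if_neg h1, if_neg h2, if_pos hF, if_pos rfl] at hb
        simp only [Finset.mem_singleton] at hb
        simp [hb]
    · intro i hi
      have hb := hbox i
      rw [boxes] at hb
      by_cases h1 : i < p
      · rw [if_pos h1] at hb; simp only [Finset.mem_singleton] at hb; exact absurd hb hi
      · by_cases h2 : i = p
        · subst h2; exact hpF
        · rw [if_neg h1, if_neg h2] at hb
          by_cases h3 : i ∈ F
          · exact h3
          · rw [if_neg h3] at hb; simp only [Finset.mem_singleton] at hb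
            exact absurd hb hi
    · intro i i' hlt hAGi
      have hip : i = p := hAG i hAGi
      subst hip
      have hb := hbox i'
      rw [boxes, if_pos hlt] at hb
      simpa using hb
    · intro i
      have hb := hbox i
      rw [boxes] at hb
      by_cases h1 : i < p
      · rw [if_pos h1] at hb; simp only [Finset.mem_singleton] at hb; simp [hb]
      · by_cases h2 : i = p
        · rw [if_neg h1, if_pos h2] at hb
          simp only [Finset.mem_insert, Finset.mem_singleton] at hb
          rcases hb with h | h | h <;> simp [h]
        · rw [if_neg h1, if_neg h2] at hb
          by_cases h3 : i ∈ F
          · rw [if_pos h3] at hb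
            by_cases h4 : i = Fin.last m
            · rw [if_pos h4] at hb; simp only [Finset.mem_singleton] at hb; simp [hb]
            · rw [if_neg h4] at hb
              simp only [Finset.mem_insert, Finset.mem_singleton] at hb
              rcases hb with h | h <;> simp [h]
          · rw [if_neg h3] at hb; simp only [Finset.mem_singleton] at hb; simp [hb]

lemma boxes_disj (F : Finset (Fin (m+1))) :
    (↑F : Set (Fin (m+1))).PairwiseDisjoint (fun p => Fintype.piFinset (boxes F p)) := by
  have aux : ∀ p q : Fin (m+1), p < q →
      Disjoint (Fintype.piFinset (boxes F p)) (Fintype.piFinset (boxes F q)) := by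
    intro p q hpq
    rw [Finset.disjoint_left]
    intro c hcp hcq
    rw [Fintype.mem_piFinset] at hcp hcq
    have h1 := hcp p
    have h2 := hcq p
    rw [boxes, if_pos hpq] at h2
    rw [boxes, if_neg (lt_irrefl p), if_pos rfl] at h1
    simp only [Finset.mem_singleton] at h2
    rw [h2] at h1
    simp at h1
  intro p hp q hq hpq
  rcases lt_or_gt_of_ne hpq with h | h
  · exact aux p q h
  · exact (aux q p h).symm

lemma prod_ite_card {α : Type*} [Fintype α] {Q : α → Prop} [DecidablePred Q] (v : ℕ) :
    (∏ i, if Q i then v else (1:ℕ)) = v ^ (univ.filter Q).card := by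
  rw [← Finset.prod_filter]
  exact Finset.prod_const v

lemma sum_box (F : Finset (Fin (m+1))) (p : Fin (m+1)) (hp : p ∈ F) (v : ℕ) :
    ∑ c ∈ Fintype.piFinset (boxes F p),
        v ^ (F.filter (fun i => c i ≠ some SLetter.B)).card
      = (2*v+1) * (v ^ (F.filter (· < p)).card *
          (v+1) ^ (F.filter (fun i => p < i ∧ i ≠ Fin.last m)).card) := by
  have hw : ∀ c : Fin (m+1) → Option SLetter,
      v ^ (F.filter (fun i => c i ≠ some SLetter.B)).card
        = ∏ i, (if i ∈ F ∧ c i ≠ some SLetter.B then v else (1:ℕ)) := by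
    intro c
    have h1 : F.filter (fun i => c i ≠ some SLetter.B)
        = univ.filter (fun i => i ∈ F ∧ c i ≠ some SLetter.B) := by
      ext i; simp
    rw [h1, ← prod_ite_card]
  rw [Finset.sum_congr rfl (fun c _ => hw c), ← Finset.prod_univ_sum (boxes F p)
    (fun i y => if i ∈ F ∧ y ≠ some SLetter.B then v else (1:ℕ))]
  have hfac : ∀ i : Fin (m+1),
      (∑ x ∈ boxes F p i, if i ∈ F ∧ x ≠ some SLetter.B then v else (1:ℕ))
        = (if i = p then 2*v+1 else 1) * ((if i ∈ F ∧ i < p then v else 1) *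
            (if i ∈ F ∧ p < i ∧ i ≠ Fin.last m then v+1 else 1)) := by
    intro i
    rcases lt_trichotomy i p with h | h | h
    · rw [boxes, if_pos h, Finset.sum_singleton]
      have h2 : ¬ p < i := asymm h
      rw [if_neg (ne_of_lt h), if_neg (fun hc : _ ∧ _ ∧ _ => h2 hc.2.1)]
      by_cases hiF : i ∈ F
      · rw [if_pos (⟨hiF, h⟩ : _ ∧ _)]
        simp [hiF]
      · rw [if_neg (fun hc : _ ∧ _ => hiF hc.1)]
        simp [hiF]
    · subst h
      rw [boxes, if_neg (lt_irrefl _), if_pos rfl]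
      rw [Finset.sum_insert (by simp), Finset.sum_insert (by simp), Finset.sum_singleton]
      rw [if_pos rfl, if_neg (fun hc : _ ∧ _ => lt_irrefl i hc.2),
        if_neg (fun hc : _ ∧ _ ∧ _ => lt_irrefl i hc.2.1)]
      rw [if_pos (⟨hp, by simp⟩ : _ ∧ _), if_neg (by simp),
        if_pos (⟨hp, by simp⟩ : _ ∧ _)]
      ring
    · have h1 : ¬ i < p := asymm h
      have h2 : i ≠ p := ne_of_gt h
      rw [boxes, if_neg h1, if_neg h2]
      rw [if_neg h2, if_neg (fun hc : _ ∧ _ => h1 hc.2)]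
      by_cases hiF : i ∈ F
      · rw [if_pos hiF]
        by_cases hil : i = Fin.last m
        · rw [if_pos hil, Finset.sum_singleton, if_neg (by simp),
            if_neg (by simp [hil])]
        · rw [if_neg hil, Finset.sum_insert (by simp), Finset.sum_singleton,
            if_pos (⟨hiF, h, hil⟩ : _ ∧ _ ∧ _)]
          simp [hiF]
      · rw [if_neg hiF, Finset.sum_singleton,
          if_neg (fun hc : _ ∧ _ ∧ _ => hiF hc.1)]
        simp [hiF]
  rw [Finset.prod_congr rfl (fun i _ => hfac i), Finset.prod_mul_distrib,
    Finset.prod_mul_distrib]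
  have e1 : (∏ i : Fin (m+1), if i = p then 2*v+1 else 1) = 2*v+1 :=
    Fintype.prod_ite_eq' p (fun _ => 2*v+1)
  have e2 : (∏ i : Fin (m+1), if i ∈ F ∧ i < p then v else 1)
      = v ^ (F.filter (· < p)).card := by
    rw [prod_ite_card]
    congr 1
    congr 1
    ext i; simp
  have e3 : (∏ i : Fin (m+1), if i ∈ F ∧ p < i ∧ i ≠ Fin.last m then v+1 else 1)
      = (v+1) ^ (F.filter (fun i => p < i ∧ i ≠ Fin.last m)).card := by
    rw [prod_ite_card]
    congr 1
    congr 1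
    ext i; simp
  rw [e1, e2, e3]

lemma sum_VC (F : Finset (Fin (m+1))) (hF : Fin.last m ∈ F) (v : ℕ) :
    ∑ c ∈ univ.filter (VC F), v ^ (F.filter (fun i => c i ≠ some SLetter.B)).card
      = (2*v+1) * (v+1) ^ (F.card - 1) := by
  rw [filter_VC_eq F hF, Finset.sum_biUnion (boxes_disj F),
    Finset.sum_congr rfl (fun p hp => sum_box F p hp v), ← Finset.mul_sum,
    ND3.sum_aF F hF v]

end ND4

namespace ND5
open Finset

variable {m : ℕ}

def res (T : ND.Grid (m+1)) : ND.Grid m := fun i j => T i.castSucc j.succ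

def ext (c : Fin (m+1) → Option SLetter) (T' : ND.Grid m) : ND.Grid (m+1) := fun i j =>
  if hj : (j : ℕ) = 0 then c i
  else if hi : (i : ℕ) < m then
    T' ⟨i, hi⟩ ⟨(j : ℕ) - 1, by have := j.isLt; omega⟩
  else none

def freeF (T' : ND.Grid m) : Finset (Fin (m+1)) :=
  univ.filter (fun i => ∀ i' : Fin m, (i' : ℕ) = (i : ℕ) → ∀ j, T' i' j ≠ some SLetter.B)

lemma ext_zero (c : Fin (m+1) → Option SLetter) (T' : ND.Grid m) (i j : Fin (m+1))
    (hj : (j : ℕ) = 0) : ext c T' i j = c i := dif_pos hj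

lemma ext_pos (c : Fin (m+1) → Option SLetter) (T' : ND.Grid m) {i j : Fin (m+1)}
    (hj : (j : ℕ) ≠ 0) (hi : (i : ℕ) < m) :
    ext c T' i j = T' ⟨i, hi⟩ ⟨(j : ℕ) - 1, by have := j.isLt; omega⟩ := by
  rw [ext, dif_neg hj, dif_pos hi]

lemma ext_out (c : Fin (m+1) → Option SLetter) (T' : ND.Grid m) {i j : Fin (m+1)}
    (hj : (j : ℕ) ≠ 0) (hi : ¬ (i : ℕ) < m) : ext c T' i j = none := by
  rw [ext, dif_neg hj, dif_neg hi]

lemma last_mem_freeF (T' : ND.Grid m) : Fin.last m ∈ freeF T' := by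
  simp only [freeF, mem_filter, mem_univ, true_and]
  intro i' hi'
  have h := i'.isLt
  rw [Fin.val_last] at hi'
  exact absurd hi' (by omega)

lemma card_freeF (T' : ND.Grid m) : (freeF T').card = ND.freeCount m T' + 1 := by
  have himg : freeF T' = insert (Fin.last m)
      ((univ.filter (fun i' : Fin m => ∀ j, T' i' j ≠ some SLetter.B)).image Fin.castSucc) := by
    ext i
    simp only [freeF, mem_filter, mem_univ, true_and, Finset.mem_insert, Finset.mem_image]
    constructor
    · intro h
      by_cases hi : (i : ℕ) = m
      · left; exact Fin.ext (by rw [Fin.val_last]; exact hi)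
      · right
        have hlt : (i : ℕ) < m := by have := i.isLt; omega
        exact ⟨⟨(i : ℕ), hlt⟩, h ⟨(i : ℕ), hlt⟩ rfl, Fin.ext (by simp)⟩
    · rintro (rfl | ⟨a, ha, rfl⟩)
      · intro i' hi'
        have h := i'.isLt
        rw [Fin.val_last] at hi'
        exact absurd hi' (by omega)
      · intro i' hi' j
        have hia : i' = a := Fin.ext (by simpa using hi')
        rw [hia]
        exact ha j
  have hnm : Fin.last m ∉
      (univ.filter (fun i' : Fin m => ∀ j, T' i' j ≠ some SLetter.B)).image Fin.castSucc := by
    simp only [Finset.mem_image]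
    rintro ⟨a, -, ha⟩
    have hv := congrArg Fin.val ha
    simp only [Fin.coe_castSucc, Fin.val_last] at hv
    have := a.isLt
    omega
  rw [himg, Finset.card_insert_of_notMem hnm,
    Finset.card_image_of_injective _ (Fin.castSucc_injective m), ND.freeCount]

lemma res_mem {T : ND.Grid (m+1)} (hT : T ∈ ND.ST (m+1)) : res T ∈ ND.ST m := by
  rw [ND.ST, mem_filter] at hT ⊢
  obtain ⟨-, ⟨hS1, hS2, hS3, hS4⟩, hD⟩ := hT
  rw [ND.countLetter_eq_zero] at hD
  refine ⟨mem_univ _, ⟨?_, ?_, ?_, ?_⟩, ?_⟩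
  · intro i j hij
    exact hS1 i.castSucc j.succ (by rw [Fin.coe_castSucc, Fin.val_succ]; omega)
  · intro i j hij
    exact hS2 i.castSucc j.succ (by rw [Fin.coe_castSucc, Fin.val_succ]; omega)
  · intro i j j' hlt hBD
    exact hS3 i.castSucc j.succ j'.succ (by rwa [Fin.succ_lt_succ_iff]) hBD
  · intro i i' j hlt hAG
    exact hS4 i.castSucc i'.castSucc j.succ (by rwa [Fin.castSucc_lt_castSucc_iff]) hAG
  · rw [ND.countLetter_eq_zero]
    intro i j
    exact hD i.castSucc j.succ

lemma ext_mem {T' : ND.Grid m} {c : Fin (m+1) → Option SLetter}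
    (hT' : T' ∈ ND.ST m) (hc : ND4.VC (freeF T') c) : ext c T' ∈ ND.ST (m+1) := by
  rw [ND.ST, mem_filter] at hT' ⊢
  obtain ⟨-, ⟨hS1, hS2, hS3, hS4⟩, hD⟩ := hT'
  rw [ND.countLetter_eq_zero] at hD
  obtain ⟨hlast, hfree, htop, hnoD⟩ := hc
  have hfree' : ∀ i : Fin (m+1), c i ≠ none →
      ∀ i' : Fin m, (i' : ℕ) = (i : ℕ) → ∀ j, T' i' j ≠ some SLetter.B := by
    intro i hi
    have h := hfree i hi
    simpa [freeF, mem_filter] using h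
  refine ⟨mem_univ _, ⟨?_, ?_, ?_, ?_⟩, ?_⟩
  · intro i j hij
    by_cases hj : (j : ℕ) = 0
    · exfalso; have := i.isLt; omega
    · by_cases hi : (i : ℕ) < m
      · rw [ext_pos c T' hj hi]
        exact hS1 _ _ (show m ≤ (i : ℕ) + ((j : ℕ) - 1) by omega)
      · rw [ext_out c T' hj hi]
  · intro i j hij
    by_cases hj : (j : ℕ) = 0
    · have hi : i = Fin.last m := Fin.ext (by rw [Fin.val_last]; omega)
      rw [ext_zero c T' i j hj, hi]
      exact hlast
    · have hi : (i : ℕ) < m := by omega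
      rw [ext_pos c T' hj hi]
      exact hS2 _ _ (show (i : ℕ) + ((j : ℕ) - 1) + 1 = m by omega)
  · intro i j j' hlt hBD
    by_cases hj : (j : ℕ) = 0
    · exfalso
      rw [Fin.lt_def] at hlt
      omega
    · by_cases hi : (i : ℕ) < m
      · rw [ext_pos c T' hj hi] at hBD
        have hB : T' ⟨(i : ℕ), hi⟩ ⟨(j : ℕ) - 1, by have := j.isLt; omega⟩
            = some SLetter.B := by
          rcases hBD with h | h
          · exact h
          · exact absurd h (hD _ _)
        by_cases hj' : (j' : ℕ) = 0
        · rw [ext_zero c T' i j' hj']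
          by_contra hcne
          exact hfree' i hcne ⟨(i : ℕ), hi⟩ rfl _ hB
        · rw [ext_pos c T' hj' hi]
          refine hS3 ⟨(i : ℕ), hi⟩ _ _ ?_ (Or.inl hB)
          rw [Fin.mk_lt_mk]
          rw [Fin.lt_def] at hlt
          omega
      · rw [ext_out c T' hj hi] at hBD
        rcases hBD with h | h <;> exact nomatch h
  · intro i i' j hlt hAG
    by_cases hj : (j : ℕ) = 0
    · rw [ext_zero c T' i j hj] at hAG
      rw [ext_zero c T' i' j hj]
      exact htop i i' hlt hAG
    · by_cases hi : (i : ℕ) < m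
      · rw [ext_pos c T' hj hi] at hAG
        have hlt' : (i' : ℕ) < (i : ℕ) := by rwa [Fin.lt_def] at hlt
        have hi' : (i' : ℕ) < m := lt_trans hlt' hi
        rw [ext_pos c T' hj hi']
        exact hS4 ⟨(i : ℕ), hi⟩ ⟨(i' : ℕ), hi'⟩ _ (by rwa [Fin.mk_lt_mk]) hAG
      · rw [ext_out c T' hj hi] at hAG
        rcases hAG with h | h <;> exact nomatch h
  · rw [ND.countLetter_eq_zero]
    intro i j
    by_cases hj : (j : ℕ) = 0
    · rw [ext_zero c T' i j hj]; exact hnoD i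
    · by_cases hi : (i : ℕ) < m
      · rw [ext_pos c T' hj hi]; exact hD _ _
      · rw [ext_out c T' hj hi]; exact (Option.some_ne_none _).symm

lemma res_ext (c : Fin (m+1) → Option SLetter) (T' : ND.Grid m) : res (ext c T') = T' := by
  funext i j
  show ext c T' i.castSucc j.succ = T' i j
  have hj : ((j.succ : Fin (m+1)) : ℕ) ≠ 0 := by simp [Fin.val_succ]
  have hi : ((i.castSucc : Fin (m+1)) : ℕ) < m := by
    rw [Fin.coe_castSucc]; exact i.isLt
  rw [ext_pos c T' hj hi]
  have e1 : (⟨((i.castSucc : Fin (m+1)) : ℕ), hi⟩ : Fin m) = i :=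
    Fin.ext (by rw [Fin.coe_castSucc])
  have e2 : (⟨((j.succ : Fin (m+1)) : ℕ) - 1, by have := (j.succ : Fin (m+1)).isLt; omega⟩
      : Fin m) = j := Fin.ext (by
        show ((j.succ : Fin (m+1)) : ℕ) - 1 = (j : ℕ)
        rw [Fin.val_succ]; omega)
  rw [e1, e2]

lemma ext_recon {T : ND.Grid (m+1)} (hT : T ∈ ND.ST (m+1)) :
    ext (fun i => T i 0) (res T) = T := by
  rw [ND.ST, mem_filter] at hT
  obtain ⟨-, ⟨hS1, -, -, -⟩, -⟩ := hT
  funext i j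
  by_cases hj : (j : ℕ) = 0
  · rw [ext_zero _ _ i j hj]
    have hj0 : j = 0 := Fin.ext (by simp [hj])
    rw [hj0]
  · by_cases hi : (i : ℕ) < m
    · rw [ext_pos _ _ hj hi]
      show T (Fin.castSucc ⟨(i : ℕ), hi⟩) (Fin.succ ⟨(j : ℕ) - 1, by have := j.isLt; omega⟩)
        = T i j
      have e1 : Fin.castSucc (⟨(i : ℕ), hi⟩ : Fin m) = i := Fin.ext (by simp)
      have e2 : Fin.succ (⟨(j : ℕ) - 1, by have := j.isLt; omega⟩ : Fin m) = j :=
        Fin.ext (by simp [Fin.val_succ]; omega)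
      rw [e1, e2]
    · rw [ext_out _ _ hj hi]
      exact (hS1 i j (by omega)).symm

lemma col_mem {T : ND.Grid (m+1)} (hT : T ∈ ND.ST (m+1)) :
    ND4.VC (freeF (res T)) (fun i => T i 0) := by
  rw [ND.ST, mem_filter] at hT
  obtain ⟨-, ⟨hS1, hS2, hS3, hS4⟩, hD⟩ := hT
  rw [ND.countLetter_eq_zero] at hD
  refine ⟨?_, ?_, ?_, ?_⟩
  · exact hS2 (Fin.last m) 0 (by simp)
  · intro i hi
    simp only [freeF, mem_filter, mem_univ, true_and]
    intro i' hi' j hB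
    have h0 : T (Fin.castSucc i') 0 = none :=
      hS3 (Fin.castSucc i') j.succ 0 (by simp [Fin.lt_def]) (Or.inl hB)
    have hci : Fin.castSucc i' = i := Fin.ext (by simpa using hi')
    rw [hci] at h0
    exact hi h0
  · intro i i' hlt hAG
    exact hS4 i i' 0 hlt hAG
  · intro i
    exact hD i 0

lemma freeCount_ext {T' : ND.Grid m} (c : Fin (m+1) → Option SLetter) :
    ND.freeCount (m+1) (ext c T')
      = ((freeF T').filter (fun i => c i ≠ some SLetter.B)).card := by
  rw [ND.freeCount]
  congr 1
  ext i
  simp only [mem_filter, mem_univ, true_and, freeF]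
  constructor
  · intro h
    refine ⟨?_, ?_⟩
    · intro i' hi' j
      have hiv : (i : ℕ) < m := by rw [← hi']; exact i'.isLt
      have hh := h j.succ
      rw [ext_pos c T' (by simp [Fin.val_succ]) hiv] at hh
      have e1 : (⟨(i : ℕ), hiv⟩ : Fin m) = i' := Fin.ext (by simp [hi'])
      have e2 : (⟨((j.succ : Fin (m+1)) : ℕ) - 1, by have := (j.succ : Fin (m+1)).isLt; omega⟩
          : Fin m) = j := Fin.ext (by
            show ((j.succ : Fin (m+1)) : ℕ) - 1 = (j : ℕ)
            rw [Fin.val_succ]; omega)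
      rw [e1, e2] at hh
      exact hh
    · have hh := h 0
      rw [ext_zero c T' i 0 (by simp)] at hh
      exact hh
  · rintro ⟨hrow, hcB⟩ j
    by_cases hj : (j : ℕ) = 0
    · rw [ext_zero c T' i j hj]; exact hcB
    · by_cases hi : (i : ℕ) < m
      · rw [ext_pos c T' hj hi]
        exact hrow ⟨(i : ℕ), hi⟩ rfl _
      · rw [ext_out c T' hj hi]; exact (Option.some_ne_none _).symm

lemma fiber_sum {T' : ND.Grid m} (hT' : T' ∈ ND.ST m) (v : ℕ) :
    ∑ T ∈ (ND.ST (m+1)).filter (fun T => res T = T'), v ^ ND.freeCount (m+1) T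
      = (2*v+1) * (v+1) ^ ND.freeCount m T' := by
  have key : ∑ T ∈ (ND.ST (m+1)).filter (fun T => res T = T'), v ^ ND.freeCount (m+1) T
      = ∑ c ∈ univ.filter (ND4.VC (freeF T')),
          v ^ ((freeF T').filter (fun i => c i ≠ some SLetter.B)).card := by
    refine Finset.sum_nbij' (fun T => fun i => T i 0) (fun c => ext c T')
      ?_ ?_ ?_ ?_ ?_
    · intro T hTf
      rw [mem_filter] at hTf
      have hv := col_mem hTf.1
      rw [hTf.2] at hv
      exact mem_filter.2 ⟨mem_univ _, hv⟩
    · intro c hc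
      rw [mem_filter] at hc
      exact mem_filter.2 ⟨ext_mem hT' hc.2, res_ext c T'⟩
    · intro T hTf
      rw [mem_filter] at hTf
      rw [← hTf.2]
      exact ext_recon hTf.1
    · intro c hc
      funext i
      exact ext_zero c T' i 0 (by simp)
    · intro T hTf
      rw [mem_filter] at hTf
      have h1 : ND.freeCount (m+1) T
          = ND.freeCount (m+1) (ext (fun i => T i 0) (res T)) := by
        rw [ext_recon hTf.1]
      rw [h1, freeCount_ext, hTf.2]
  rw [key, ND4.sum_VC _ (last_mem_freeF T') v, card_freeF]
  simp

lemma S_succ (m v : ℕ) : ND.S (m+1) v = (2*v+1) * ND.S m (v+1) := by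
  rw [ND.S, ← Finset.sum_fiberwise_of_maps_to (g := res)
    (fun T hT => res_mem hT) (fun T => v ^ ND.freeCount (m+1) T)]
  rw [ND.S, Finset.mul_sum]
  exact Finset.sum_congr rfl fun T' hT' => fiber_sum hT' v

lemma S_prod : ∀ n v : ℕ, ND.S n v = ∏ j ∈ Finset.range n, (2*(v+j)+1) := by
  intro n
  induction n with
  | zero => intro v; rw [ND.S_zero]; simp
  | succ m ih =>
    intro v
    rw [S_succ, ih (v+1), Finset.prod_range_succ']
    have h1 : ∀ j ∈ Finset.range m, 2*((v+1)+j)+1 = 2*(v+(j+1))+1 := by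
      intro j _; ring
    rw [Finset.prod_congr rfl h1]
    ring

lemma card_eq (n : ℕ) :
    (Finset.univ.filter
        (fun T : StaircaseTableau n => countLetter n T.val SLetter.D = 0)).card
      = ND.S n 1 := by
  rw [ND.S, Finset.sum_congr rfl (fun T _ => one_pow _), Finset.sum_const, smul_eq_mul,
    mul_one]
  refine Finset.card_bij' (fun T _ => T.val)
    (fun T hT => (⟨T, ((Finset.mem_filter.1 hT).2).1⟩ : StaircaseTableau n)) ?_ ?_ ?_ ?_
  · intro a ha
    rw [ND.ST, Finset.mem_filter]
    exact ⟨Finset.mem_univ _, a.prop, (Finset.mem_filter.1 ha).2⟩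
  · intro a ha
    apply Finset.mem_filter.2
    refine ⟨Finset.mem_univ _, ?_⟩
    have h := (Finset.mem_filter.1 ha).2.2
    exact h
  · intro a ha; rfl
  · intro a ha; rfl

end ND5


/-- For every positive integer `n`, the number of staircase tableaux of size `n`
containing no symbol `δ` equals the double factorial `(2n+1)!! = 1·3·5⋯(2n+1)`. -/
theorem card_staircaseTableau_no_delta (n : ℕ) (hn : 1 ≤ n) :
    (Finset.univ.filter
        (fun T : StaircaseTableau n => countLetter n T.val SLetter.D = 0)).card =
      ∏ j ∈ Finset.range (n + 1), (2 * j + 1) := by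
  rw [ND5.card_eq n, ND5.S_prod n 1, Finset.prod_range_succ']
  have h1 : ∀ j ∈ Finset.range n, 2*(1+j)+1 = 2*(j+1)+1 := fun j _ => by ring
  rw [Finset.prod_congr rfl h1]
  simp
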